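/- (The family Π(t) = P·exp(tG) is a (non-standard) semigroup; claim in Step ii of Section 2.1.) Let E be a finite index type and let P and G be real E×E matrices satisfying P·P = P, P·G = G and G·P = G. Then for all s, t > 0: (P·exp(s·G))·(P·exp(t·G)) = P·exp((s+t)·G). Consequently, setting Π(t) := P·exp(t·G) for t > 0 and Π(0) := I (the identity matrix), the family (Π(t))_{t ≥ 0} satisfies Π(s)·Π(t) = Π(s+t) for all s, t ≥ 0. -/

import Mathlib

/-- (The family `Π(t) = P·exp(t·G)` is a (non-standard) semigroup;
claim in Step ii of Section 2.1.) If `P·P = P`, `P·G = G` and `G·P = G`, then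
`(P·exp(s·G))·(P·exp(t·G)) = P·exp((s+t)·G)` for all `s, t > 0`; consequently, with
`Π(t) := P·exp(t·G)` for `t > 0` and `Π(0) := I`, one has `Π(s)·Π(t) = Π(s+t)` for all
`s, t ≥ 0`. -/
theorem projection_exp_semigroup (E : Type*) [Fintype E] [DecidableEq E]
    (P G : Matrix E E ℝ) (hP : P * P = P) (hPG : P * G = G) (hGP : G * P = G) :
    (∀ s t : ℝ, 0 < s → 0 < t →
        (P * NormedSpace.exp (s • G)) * (P * NormedSpace.exp (t • G)) =
          P * NormedSpace.exp ((s + t) • G)) ∧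
      ∀ s t : ℝ, 0 ≤ s → 0 ≤ t →
        (fun u : ℝ => if u = 0 then (1 : Matrix E E ℝ) else P * NormedSpace.exp (u • G)) s *
            (fun u : ℝ => if u = 0 then (1 : Matrix E E ℝ) else P * NormedSpace.exp (u • G)) t =
          (fun u : ℝ => if u = 0 then (1 : Matrix E E ℝ) else P * NormedSpace.exp (u • G))
            (s + t) := by

  have hcomm : ∀ u : ℝ, P * NormedSpace.exp (u • G) = NormedSpace.exp (u • G) * P := by
    intro u
    letI : SeminormedRing (Matrix E E ℝ) := Matrix.linftyOpSemiNormedRing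
    letI : NormedRing (Matrix E E ℝ) := Matrix.linftyOpNormedRing
    letI : NormedAlgebra ℝ (Matrix E E ℝ) := Matrix.linftyOpNormedAlgebra
    exact (Commute.exp_right (show P * (u • G) = (u • G) * P by
      rw [Matrix.mul_smul, Matrix.smul_mul, hPG, hGP])).eq
  have key : ∀ s t : ℝ,
      (P * NormedSpace.exp (s • G)) * (P * NormedSpace.exp (t • G)) =
        P * NormedSpace.exp ((s + t) • G) := by
    intro s t
    have h1 : Commute (s • G) (t • G) := by
      apply Commute.smul_left; apply Commute.smul_right; exact Commute.refl G
    rw [add_smul, Matrix.exp_add_of_commute (s • G) (t • G) h1]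
    calc (P * NormedSpace.exp (s • G)) * (P * NormedSpace.exp (t • G))
        = P * (NormedSpace.exp (s • G) * P) * NormedSpace.exp (t • G) := by
          simp [mul_assoc]
      _ = P * (P * NormedSpace.exp (s • G)) * NormedSpace.exp (t • G) := by
          rw [hcomm s]
      _ = P * (NormedSpace.exp (s • G) * NormedSpace.exp (t • G)) := by
          rw [← mul_assoc, ← mul_assoc, hP, mul_assoc]
  refine ⟨fun s t _ _ => key s t, fun s t hs ht => ?_⟩
  simp only
  rcases eq_or_lt_of_le hs with rfl | hs
  · simp
  rcases eq_or_lt_of_le ht with rfl | ht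
  · simp
  rw [if_neg hs.ne', if_neg ht.ne', if_neg (by positivity), key]
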